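/- Let (R, m) be a Noetherian local ring, a an ideal, M a finitely generated R-module, and i an integer. If F^i_a(M) is an Artinian R-module, then CoSupp F^i_a(M) ⊆ V(a). -/

import Mathlib

open CategoryTheory CategoryTheory.Limits IsLocalRing DirectSum

noncomputable section

/-- The inverse system `n ↦ M ⧸ aⁿM` with the natural projection maps. -/
def formalQuotDiagram (R : Type) [CommRing R] (a : Ideal R)
    (M : Type) [AddCommGroup M] [Module R M] : ℕᵒᵖ ⥤ ModuleCat R :=
  CategoryTheory.Functor.ofOpSequence
    (X := fun n => ModuleCat.of R (M ⧸ (a ^ n • ⊤ : Submodule R M)))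
    (fun n => ModuleCat.ofHom (Submodule.mapQ _ _ LinearMap.id (by
      simpa using Submodule.smul_mono (Ideal.pow_le_pow_right n.le_succ) le_rfl)))

/-- Formal local cohomology `𝔉ⁱ_a(M) = lim_n Hⁱ_m(M ⧸ aⁿM)`. -/
def formalLocalCohomology (R : Type) [CommRing R] [IsLocalRing R] (a : Ideal R) (i : ℕ)
    (M : Type) [AddCommGroup M] [Module R M] : ModuleCat R :=
  limit (formalQuotDiagram R a M ⋙ localCohomology (maximalIdeal R) i)

/-- Attached primes of a module: primes of the form `Ann(M/N)`. -/
def attachedPrimes (R : Type) [CommRing R] (M : Type) [AddCommGroup M] [Module R M] :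
    Set (Ideal R) :=
  {p | p.IsPrime ∧ ∃ N : Submodule R M, p = Module.annihilator R (M ⧸ N)}

/-- `E` is an injective hull (injective essential extension) of `N`. -/
def IsInjectiveHull (R : Type) [CommRing R] (N : Type) [AddCommGroup N] [Module R N]
    (E : Type) [AddCommGroup E] [Module R E] : Prop :=
  Module.Injective R E ∧ ∃ f : N →ₗ[R] E, Function.Injective f ∧
    ∀ S : Submodule R E, S ≠ ⊥ → S ⊓ LinearMap.range f ≠ ⊥

/-- The module `⊕_{m maximal} R/m`, whose injective hull is the minimal injective
cogenerator `E_R`. -/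
def cogenerator (R : Type) [CommRing R] : Type :=
  ⨁ m : MaximalSpectrum R, R ⧸ m.asIdeal

instance (R : Type) [CommRing R] : AddCommGroup (cogenerator R) := by
  unfold cogenerator; infer_instance

instance (R : Type) [CommRing R] : Module R (cogenerator R) := by
  unfold cogenerator; infer_instance

/-- Richardson's cosupport, via colocalization: `p ∈ CoSupp M` iff
`ᵖM = D_{R_p}((D_R M)_p) ≠ 0`, where `D` denotes duals into minimal injective
cogenerators (injective hulls of the direct sum of the residue fields). -/
def CoSupport (R : Type) [CommRing R] (M : Type) [AddCommGroup M] [Module R M] :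
    Set (PrimeSpectrum R) :=
  {p | ∀ (E : Type) [AddCommGroup E] [Module R E], IsInjectiveHull R (cogenerator R) E →
       ∀ (Ep : Type) [AddCommGroup Ep] [Module (Localization.AtPrime p.asIdeal) Ep],
         IsInjectiveHull (Localization.AtPrime p.asIdeal)
           (cogenerator (Localization.AtPrime p.asIdeal)) Ep →
       Nontrivial ((LocalizedModule p.asIdeal.primeCompl (M →ₗ[R] E))
          →ₗ[Localization.AtPrime p.asIdeal] Ep)}

/-- Coassociated primes over a local ring: `Coass M = Ass Hom_R(M, E(R/m))`. -/
def Coassociated (R : Type) [CommRing R] [IsLocalRing R]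
    (M : Type) [AddCommGroup M] [Module R M] : Set (PrimeSpectrum R) :=
  {p | ∀ (E : Type) [AddCommGroup E] [Module R E],
        IsInjectiveHull R (R ⧸ maximalIdeal R) E →
        p.asIdeal ∈ associatedPrimes R (M →ₗ[R] E)}

/-- The height of an ideal. -/
def idealHeight (R : Type) [CommRing R] (a : Ideal R) : ℕ∞ :=
  sInf {n | ∃ p : PrimeSpectrum R, a ≤ p.asIdeal ∧ Order.height p = n}

/-- The `a`-torsion submodule `H⁰_a(M) = ∪ₙ (0 :_M aⁿ)`. -/
def idealTorsion (R : Type) [CommRing R] (a : Ideal R)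
    (M : Type) [AddCommGroup M] [Module R M] : Submodule R M :=
  ⨆ n : ℕ, Submodule.torsionBySet R M ((a ^ n : Ideal R) : Set R)

/-- A Noetherian local ring is Gorenstein iff it has finite injective dimension
over itself, i.e. `Extⁱ(N, R) = 0` for all `i` larger than some bound and all `N`. -/
def IsGorensteinLocalRing (R : Type) [CommRing R] : Prop :=
  IsNoetherianRing R ∧ IsLocalRing R ∧
    ∃ n : ℕ, ∀ i : ℕ, n < i → ∀ N : ModuleCat R,
      Subsingleton (((Ext R (ModuleCat R) i).obj (Opposite.op N)).obj (ModuleCat.of R R))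

end

noncomputable section AuxStmt9
open CategoryTheory CategoryTheory.Limits Opposite

variable (R : Type) [CommRing R]

-- step 1: embedding into an injective module
lemma exists_emb_injective (N : Type) [AddCommGroup N] [Module R N] :
    ∃ (E : Type) (_ : AddCommGroup E) (_ : Module R E) (_ : Module.Injective R E)
      (f : N →ₗ[R] E), Function.Injective f := by
  let N' : ModuleCat R := ModuleCat.of R N
  let J := Injective.under N'
  haveI : Injective (ModuleCat.of R ↥J) := by
    refine Injective.of_iso ?_ (inferInstance : Injective J)
    exact Iso.refl _
  refine ⟨↥J, inferInstance, inferInstance,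
    Module.injective_module_of_injective_object R ↥J, (Injective.ι N').hom, ?_⟩
  exact (ModuleCat.mono_iff_injective (Injective.ι N')).mp inferInstance

namespace HullAux
variable {R} {E0 : Type} [AddCommGroup E0] [Module R E0]

/-- `S` is an essential extension of `range f0` (elementwise form). -/
def Good (f0 : Submodule R E0) (S : Submodule R E0) : Prop :=
  f0 ≤ S ∧ ∀ x ∈ S, x ≠ 0 → ∃ r : R, r • x ≠ 0 ∧ r • x ∈ f0

lemma exists_max_good (f0 : Submodule R E0) :
    ∃ S : Submodule R E0, Good f0 S ∧ ∀ S', Good f0 S' → S ≤ S' → S' = S := by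
  have key : ∀ c ⊆ {S | Good f0 S}, IsChain (· ≤ ·) c → ∀ y ∈ c,
      ∃ ub ∈ {S | Good f0 S}, ∀ z ∈ c, z ≤ ub := by
    intro c hc hchain y hy
    refine ⟨sSup c, ⟨le_trans (hc hy).1 (le_sSup hy), ?_⟩, fun z hz => le_sSup hz⟩
    intro x hx hx0
    rw [Submodule.mem_sSup_of_directed ⟨y, hy⟩ hchain.directedOn] at hx
    obtain ⟨S, hSc, hxS⟩ := hx
    exact (hc hSc).2 x hxS hx0
  obtain ⟨S, -, hS, hmax⟩ := zorn_le_nonempty₀ {S | Good f0 S} key f0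
    ⟨le_rfl, fun x hx hx0 => ⟨1, by simpa using hx0, by simpa using hx⟩⟩
  exact ⟨S, hS, fun S' h1 h2 => le_antisymm (hmax h1 h2) h2⟩

lemma exists_max_compl (S : Submodule R E0) :
    ∃ T : Submodule R E0, T ⊓ S = ⊥ ∧ ∀ T', T' ⊓ S = ⊥ → T ≤ T' → T' = T := by
  have key : ∀ c ⊆ {T : Submodule R E0 | T ⊓ S = ⊥}, IsChain (· ≤ ·) c → ∀ y ∈ c,
      ∃ ub ∈ {T : Submodule R E0 | T ⊓ S = ⊥}, ∀ z ∈ c, z ≤ ub := by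
    intro c hc hchain y hy
    refine ⟨sSup c, ?_, fun z hz => le_sSup hz⟩
    show sSup c ⊓ S = ⊥
    rw [eq_bot_iff]
    intro x hx
    obtain ⟨hx1, hx2⟩ := Submodule.mem_inf.mp hx
    rw [Submodule.mem_sSup_of_directed ⟨y, hy⟩ hchain.directedOn] at hx1
    obtain ⟨T, hTc, hxT⟩ := hx1
    have := hc hTc
    rw [Set.mem_setOf_eq, eq_bot_iff] at this
    exact this (Submodule.mem_inf.mpr ⟨hxT, hx2⟩)
  obtain ⟨T, -, hT, hmax⟩ := zorn_le_nonempty₀ {T : Submodule R E0 | T ⊓ S = ⊥} key ⊥ (by simp)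
  exact ⟨T, hT, fun T' h1 h2 => le_antisymm (hmax h1 h2) h2⟩
end HullAux

theorem exists_injective_hull (N : Type) [AddCommGroup N] [Module R N] :
    ∃ (E : Type) (_ : AddCommGroup E) (_ : Module R E), IsInjectiveHull R N E := by
  classical
  obtain ⟨E0, _, _, hInj0, f0, hf0⟩ := exists_emb_injective R N
  haveI : Module.Injective R E0 := hInj0
  set F0 := LinearMap.range f0 with hF0
  obtain ⟨S, hS, hSmax⟩ := HullAux.exists_max_good F0
  obtain ⟨T, hT, hTmax⟩ := HullAux.exists_max_compl S
  set q := T.mkQ with hq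
  -- essentiality of q(S) in E0/T
  have ess : ∀ z : E0 ⧸ T, z ≠ 0 → ∃ r : R, r • z ≠ 0 ∧ r • z ∈ Submodule.map q S := by
    intro z hz
    obtain ⟨x, rfl⟩ := T.mkQ_surjective z
    have hxT : x ∉ T := fun hxT => hz ((Submodule.Quotient.mk_eq_zero T).mpr hxT)
    have hne : (T ⊔ Submodule.span R {x}) ⊓ S ≠ ⊥ := by
      intro hbot
      have := hTmax _ hbot (le_sup_left)
      exact hxT (this ▸ (le_sup_right (a := T) (Submodule.mem_span_singleton_self x)))
    obtain ⟨w, hw, hw0⟩ := Submodule.exists_mem_ne_zero_of_ne_bot hne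
    obtain ⟨hw1, hwS⟩ := Submodule.mem_inf.mp hw
    obtain ⟨t, ht, u, hu, rfl⟩ := Submodule.mem_sup.mp hw1
    obtain ⟨r, rfl⟩ := Submodule.mem_span_singleton.mp hu
    have hqt : q t = 0 := (Submodule.Quotient.mk_eq_zero T).mpr ht
    have hqw : q (t + r • x) = r • q x := by
      rw [map_add, map_smul, hqt, zero_add]
    have hqwne : q (t + r • x) ≠ 0 := by
      intro h0
      have : (t + r • x) ∈ T := (Submodule.Quotient.mk_eq_zero T).mp h0
      have : (t + r • x) ∈ T ⊓ S := Submodule.mem_inf.mpr ⟨this, hwS⟩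
      rw [hT] at this
      exact hw0 this
    exact ⟨r, fun h0 => hqwne (by rw [hqw]; exact h0), ⟨t + r • x, hwS, hqw⟩⟩
  -- extend the inclusion of S along q|S
  have hinj1 : Function.Injective (q ∘ₗ S.subtype) := by
    intro a b hab
    have : ((a : E0) - b) ∈ T := by
      rwa [LinearMap.comp_apply, LinearMap.comp_apply, ← sub_eq_zero, ← map_sub,
        Submodule.mkQ_apply, Submodule.Quotient.mk_eq_zero] at hab
    have : ((a : E0) - b) ∈ T ⊓ S := Submodule.mem_inf.mpr ⟨this, sub_mem a.2 b.2⟩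
    rw [hT, Submodule.mem_bot, sub_eq_zero] at this
    exact Subtype.ext this
  obtain ⟨g, hg⟩ := Module.Injective.extension_property R E0 ↥S (E0 ⧸ T)
    (q ∘ₗ S.subtype) hinj1 S.subtype
  have hgq : ∀ v : ↥S, g (q v) = v := fun v => LinearMap.congr_fun hg v
  have hginj : ∀ z : E0 ⧸ T, g z = 0 → z = 0 := by
    intro z hz0
    by_contra hz
    obtain ⟨r, hr0, w, hwS, hqw⟩ := ess z hz
    have h2 : g (q w) = w := hgq ⟨w, hwS⟩
    rw [hqw, map_smul, hz0, smul_zero] at h2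
    replace h2 := h2.symm
    rw [h2, map_zero] at hqw
    exact hr0 hqw.symm
  -- range g = S by maximality
  have hSU : S ≤ LinearMap.range g := by
    intro v hv
    exact ⟨q v, hgq ⟨v, hv⟩⟩
  have hgoodU : HullAux.Good F0 (LinearMap.range g) := by
    constructor
    · exact le_trans hS.1 hSU
    · rintro x ⟨z, rfl⟩ hx0
      have hz : z ≠ 0 := by rintro rfl; simp at hx0
      obtain ⟨r, hr0, w, hwS, hqw⟩ := ess z hz
      have hrx : r • g z = w := by
        have h2 : g (q w) = w := hgq ⟨w, hwS⟩
        rw [hqw, map_smul] at h2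
        exact h2
      have hw0 : w ≠ 0 := by
        intro h
        rw [h, map_zero] at hqw
        exact hr0 hqw.symm
      obtain ⟨r', hr'0, hr'F⟩ := hS.2 w hwS hw0
      exact ⟨r' * r, by rw [mul_smul, hrx]; exact hr'0, by rw [mul_smul, hrx]; exact hr'F⟩
  have hUS : LinearMap.range g = S := hSmax _ hgoodU hSU
  -- the projection π : E0 → E0 with range S, identity on S
  set π := g ∘ₗ q with hπ
  have hπS : ∀ x : E0, π x ∈ S := fun x => hUS ▸ ⟨q x, rfl⟩
  have hπid : ∀ v : E0, v ∈ S → π v = v := fun v hv => hgq ⟨v, hv⟩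
  -- S is injective
  have hSinj : Module.Injective R ↥S := by
    constructor
    intro X Y _ _ _ _ f hf gg
    obtain ⟨H, hH⟩ := Module.Injective.extension_property R E0 X Y f hf (S.subtype ∘ₗ gg)
    refine ⟨LinearMap.codRestrict S (π ∘ₗ H) (fun y => hπS _), fun x => ?_⟩
    apply Subtype.ext
    have : H (f x) = (gg x : E0) := LinearMap.congr_fun hH x
    show π (H (f x)) = (gg x : E0)
    rw [this]
    exact hπid _ (gg x).2
  -- assemble
  refine ⟨↥S, inferInstance, inferInstance, hSinj,
    LinearMap.codRestrict S f0 (fun n => hS.1 ⟨n, rfl⟩), ?_, ?_⟩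
  · intro a b hab
    exact hf0 (congrArg Subtype.val hab)
  · intro W hW
    obtain ⟨x, hxW, hx0⟩ := Submodule.exists_mem_ne_zero_of_ne_bot hW
    have hx0' : (x : E0) ≠ 0 := fun h => hx0 (Subtype.ext h)
    obtain ⟨r, hr0, n, hn⟩ := hS.2 (x : E0) x.2 hx0'
    apply Submodule.ne_bot_iff _ |>.mpr
    refine ⟨r • x, Submodule.mem_inf.mpr ⟨Submodule.smul_mem _ _ hxW, ⟨n, ?_⟩⟩, ?_⟩
    · exact Subtype.ext hn
    · intro h
      apply hr0
      have := congrArg Subtype.val h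
      simpa using this


variable {R : Type} [CommRing R]

lemma homologyMap_smul' {ι : Type} {c : ComplexShape ι}
    {K L : HomologicalComplex (ModuleCat R) c} (f : K ⟶ L) (r : R) (i : ι) :
    HomologicalComplex.homologyMap (r • f) i = r • HomologicalComplex.homologyMap f i := by
  have : (HomologicalComplex.shortComplexFunctor (ModuleCat R) c i).map (r • f)
      = r • (HomologicalComplex.shortComplexFunctor (ModuleCat R) c i).map f := rfl
  unfold HomologicalComplex.homologyMap
  rw [this, ShortComplex.homologyMap_smul]
  rfl

lemma ext_smul_id_eq_zero (N X : ModuleCat R) (r : R) (hr : ∀ x : X, r • x = (0 : X)) (i : ℕ) :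
    (r • 𝟙 (((Ext R (ModuleCat R) i).obj (op N)).obj X) : _ ⟶ _) = 0 := by
  have P : ProjectiveResolution N := (HasProjectiveResolution.out (Z := N)).some
  set C := P.complex.linearYonedaObj R X with hC
  have h1 : (r • (𝟙 C) : C ⟶ C) = 0 := by
    ext n (φ : P.complex.X n ⟶ X)
    show r • φ = 0
    ext x
    show r • φ x = 0
    exact hr _
  have h2 : (r • 𝟙 (C.homology i) : _ ⟶ _) = 0 := by
    have h3 := homologyMap_smul' (𝟙 C) r i
    rw [h1] at h3
    rw [HomologicalComplex.homologyMap_id] at h3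
    simp only [HomologicalComplex.homologyMap_zero] at h3
    exact h3.symm
  have e := P.isoExt (R := R) i X
  calc (r • 𝟙 (((Ext R (ModuleCat R) i).obj (op N)).obj X) : _ ⟶ _)
      = r • (e.hom ≫ e.inv) := by rw [e.hom_inv_id]
    _ = e.hom ≫ (r • 𝟙 (C.homology i) : _ ⟶ _) ≫ e.inv := by
        rw [Linear.smul_comp, Linear.comp_smul, Category.id_comp]
    _ = 0 := by rw [h2, zero_comp, comp_zero]

lemma localCohomology_smul_eq_zero (J : Ideal R) (i : ℕ) (X : ModuleCat R) (r : R)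
    (hr : ∀ x : X, r • x = (0 : X)) (z : (localCohomology J i).obj X) : r • z = 0 := by
  haveI := localCohomology.hasColimitDiagram.{0,0} (localCohomology.idealPowersDiagram J) i
  set G := localCohomology.diagram (localCohomology.idealPowersDiagram J) i with hG
  have hzero : (r • 𝟙 ((colimit G).obj X) : _ ⟶ _) = 0 := by
    have L := isColimitOfPreserves ((evaluation (ModuleCat R) (ModuleCat R)).obj X)
      (colimit.isColimit G)
    apply L.hom_ext
    intro n
    have hcomp : ∀ (f : (colimit G).obj X ⟶ (colimit G).obj X),
        (((evaluation (ModuleCat R) (ModuleCat R)).obj X).mapCocone (colimit.cocone G)).ι.app n ≫ f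
        = ((colimit.ι G n).app X) ≫ f := fun f => rfl
    rw [hcomp, hcomp, comp_zero, Linear.comp_smul, Category.comp_id]
    have hek : (r • 𝟙 ((G.obj n).obj X) : _ ⟶ _) = 0 :=
      ext_smul_id_eq_zero ((localCohomology.ringModIdeals (localCohomology.idealPowersDiagram J)).obj n.unop)
        X r hr i
    calc (r • (colimit.ι G n).app X : _)
        = (r • 𝟙 ((G.obj n).obj X) : _ ⟶ _) ≫ (colimit.ι G n).app X := by
          rw [Linear.smul_comp, Category.id_comp]
      _ = 0 := by rw [hek, zero_comp]
  have : r • z = (r • 𝟙 ((colimit G).obj X) : _ ⟶ _) z := rfl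
  rw [this, hzero]
  rfl

end AuxStmt9

open Opposite in
set_option maxHeartbeats 2000000 in
/-- if `𝔉ⁱ_a(M)` is Artinian, then `CoSupp 𝔉ⁱ_a(M) ⊆ V(a)`. -/
theorem stmt9 (R : Type) [CommRing R] [IsNoetherianRing R] [IsLocalRing R]
    (a : Ideal R) (M : Type) [AddCommGroup M] [Module R M] [Module.Finite R M]
    (i : ℕ) (h : IsArtinian R (formalLocalCohomology R a i M)) :
    CoSupport R (formalLocalCohomology R a i M) ⊆
      PrimeSpectrum.zeroLocus (a : Set R) := by
  classical
  haveI := h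
  set K := formalQuotDiagram R a M ⋙ localCohomology (IsLocalRing.maximalIdeal R) i with hK
  set F := formalLocalCohomology R a i M with hF
  -- components are killed by the corresponding power of `a`
  have compKill : ∀ (n : ℕ) (r : R), r ∈ a ^ n → ∀ y : (K.obj (op n)), r • y = 0 := by
    intro n r hra y
    refine localCohomology_smul_eq_zero (IsLocalRing.maximalIdeal R) i
      ((formalQuotDiagram R a M).obj (op n)) r ?_ y
    intro x
    obtain ⟨m, rfl⟩ := Submodule.Quotient.mk_surjective (a ^ n • ⊤ : Submodule R M) (x : M ⧸ (a ^ n • ⊤ : Submodule R M))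
    show Submodule.Quotient.mk (r • m) = (0 : M ⧸ (a ^ n • ⊤ : Submodule R M))
    rw [Submodule.Quotient.mk_eq_zero]
    exact Submodule.smul_mem_smul hra Submodule.mem_top
  -- the `n`-th projection kills `a ^ n • ⊤`
  have piKill : ∀ (n : ℕ) (x : ↥F), x ∈ (a ^ n • ⊤ : Submodule R ↥F) →
      limit.π K (op n) x = 0 := by
    intro n x hx
    refine Submodule.smul_induction_on hx ?_ ?_
    · intro r hr y _
      exact ((limit.π K (op n)).hom.map_smul r y).trans (compKill n r hr _)
    · intro x y hx hy
      exact ((limit.π K (op n)).hom.map_add x y).trans ((congrArg₂ (· + ·) hx hy).trans (add_zero _))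
  -- stabilization of the chain `a ^ n • ⊤`
  have mono : ∀ {n m : ℕ}, n ≤ m →
      (a ^ m • ⊤ : Submodule R ↥F) ≤ (a ^ n • ⊤ : Submodule R ↥F) :=
    fun hnm => Submodule.smul_mono_left (Ideal.pow_le_pow_right hnm)
  obtain ⟨Nn, hNn⟩ := IsArtinian.monotone_stabilizes
    (⟨fun n => (a ^ n • ⊤ : Submodule R ↥F), fun _ _ hnm => mono hnm⟩ : ℕ →o (Submodule R ↥F)ᵒᵈ)
  -- `a ^ Nn` annihilates `F`
  have key : ∀ x : ↥F, x ∈ (a ^ Nn • ⊤ : Submodule R ↥F) → x = 0 := by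
    intro x hx
    have hpi : ∀ n : ℕ, limit.π K (op n) x = 0 := by
      intro n
      have hx' : x ∈ (a ^ (max n Nn) • ⊤ : Submodule R ↥F) := by
        have h3 : (a ^ Nn • ⊤ : Submodule R ↥F) = (a ^ (max n Nn) • ⊤ : Submodule R ↥F) :=
          hNn (max n Nn) (le_max_right n Nn)
        exact h3 ▸ hx
      have h1 : limit.π K (op (max n Nn)) x = 0 := piKill _ x hx'
      have h2 := limit.w K ((homOfLE (le_max_left n Nn)).op : op (max n Nn) ⟶ op n)
      calc limit.π K (op n) x = (limit.π K (op (max n Nn)) ≫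
            K.map ((homOfLE (le_max_left n Nn)).op)) x := by rw [h2]
        _ = K.map ((homOfLE (le_max_left n Nn)).op) (limit.π K (op (max n Nn)) x) := rfl
        _ = 0 := by rw [h1, map_zero]
    refine Concrete.limit_ext K x 0 ?_
    intro j
    rw [map_zero]
    exact hpi j.unop
  have hann : ∀ s : R, s ∈ a → ∀ x : ↥F, (s ^ Nn) • x = 0 := fun s hs x =>
    key _ (Submodule.smul_mem_smul (Ideal.pow_mem_pow hs Nn) Submodule.mem_top)
  -- main argument
  intro p hp
  rw [PrimeSpectrum.mem_zeroLocus]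
  by_contra hnle
  obtain ⟨s, hsa, hsp⟩ := Set.not_subset.mp hnle
  obtain ⟨E, iE1, iE2, hE⟩ := exists_injective_hull R (cogenerator R)
  obtain ⟨Ep, iEp1, iEp2, hEp⟩ := exists_injective_hull (Localization.AtPrime p.asIdeal)
    (cogenerator (Localization.AtPrime p.asIdeal))
  letI := iE1; letI := iE2; letI := iEp1; letI := iEp2
  haveI hnt := hp E hE Ep hEp
  have hsNn : s ^ Nn ∈ p.asIdeal.primeCompl :=
    fun hmem => hsp (p.isPrime.mem_of_pow_mem Nn hmem)
  haveI hsub : Subsingleton (LocalizedModule p.asIdeal.primeCompl (↥F →ₗ[R] E)) := by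
    have hz : ∀ z : LocalizedModule p.asIdeal.primeCompl (↥F →ₗ[R] E), z = 0 := by
      intro z
      induction z using LocalizedModule.induction_on with
      | _ f u =>
        have hsf : (⟨s ^ Nn, hsNn⟩ : p.asIdeal.primeCompl) • f = 0 := by
          show (s ^ Nn) • f = 0
          ext x
          show (s ^ Nn) • f x = 0
          rw [← map_smul, hann s hsa x, map_zero]
        have : LocalizedModule.mk f u
            = LocalizedModule.mk (0 : ↥F →ₗ[R] E) (1 : p.asIdeal.primeCompl) := by
          rw [LocalizedModule.mk_eq]
          refine ⟨⟨s ^ Nn, hsNn⟩, ?_⟩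
          rw [one_smul, smul_zero, smul_zero, hsf]
        rw [this, LocalizedModule.zero_mk]
    exact ⟨fun x y => by rw [hz x, hz y]⟩
  haveI : Subsingleton ((LocalizedModule p.asIdeal.primeCompl (↥F →ₗ[R] E))
      →ₗ[Localization.AtPrime p.asIdeal] Ep) :=
    ⟨fun f g => LinearMap.ext fun x => by
      rw [Subsingleton.elim x 0, map_zero, map_zero]⟩
  exact false_of_nontrivial_of_subsingleton ((LocalizedModule p.asIdeal.primeCompl (↥F →ₗ[R] E))
      →ₗ[Localization.AtPrime p.asIdeal] Ep)
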